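/- arXiv:1710.08653 — 4 statements merged into one kernel-verified Lean document; each statement's English description precedes it below -/
import Mathlib

section
/- Let x ∈ H₂(ℂ₀⁺) and let β ∈ ℂ₀⁺. Then the function y defined on ℂ₀⁺ by y(s) = (x(s) − x(β))/(β − s) for s ≠ β and y(β) = −x′(β) belongs to H₂(ℂ₀⁺). -/
open MeasureTheory Complex ENNReal
open Set

noncomputable section

/-- Membership in the Hardy space `H₂(ℂ₀⁺)`: `f` is holomorphic on the right half-plane
`ℂ₀⁺ = {z : Re z > 0}` and `sup_{r>0} ∫_ℝ |f(r+iω)|² dω < ∞`. -/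
def MemH2plus (f : ℂ → ℂ) : Prop :=
  DifferentiableOn ℂ f {z : ℂ | 0 < z.re} ∧
  ∃ M : ℝ≥0∞, M < ⊤ ∧ ∀ r : ℝ, 0 < r →
    (∫⁻ ω : ℝ, (‖f (r + ω * Complex.I)‖₊ : ℝ≥0∞) ^ 2) ≤ M

set_option maxHeartbeats 1000000 in
/-- Let `x ∈ H₂(ℂ₀⁺)` and let `β ∈ ℂ₀⁺`.  Then the function `y` defined
on `ℂ₀⁺` by `y(s) = (x(s) − x(β))/(β − s)` for `s ≠ β` and `y(β) = −x′(β)` belongs to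
`H₂(ℂ₀⁺)`. -/
theorem statement1 (x : ℂ → ℂ) (hx : MemH2plus x) (β : ℂ) (hβ : 0 < β.re) :
    MemH2plus (fun s : ℂ => if s = β then -deriv x β else (x s - x β) / (β - s)) := by
  set y : ℂ → ℂ := fun s : ℂ => if s = β then -deriv x β else (x s - x β) / (β - s) with hy
  have hopen : IsOpen {z : ℂ | 0 < z.re} := isOpen_lt continuous_const Complex.continuous_re
  have hβmem : β ∈ {z : ℂ | 0 < z.re} := hβ
  have hnhds : {z : ℂ | 0 < z.re} ∈ nhds β := hopen.mem_nhds hβmem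
  -- y = - dslope x β
  have hyd : y = fun s => -(dslope x β s) := by
    funext s
    by_cases h : s = β
    · subst h; simp [y, dslope_same]
    · rw [hy]
      simp only [h, if_false, dslope_of_ne _ h, slope_def_field]
      rw [← neg_div, neg_sub]
      have hβs : β - s ≠ 0 := sub_ne_zero.2 (Ne.symm h)
      have hsβ : s - β ≠ 0 := sub_ne_zero.2 h
      field_simp
      ring
  -- differentiability
  have hdiff : DifferentiableOn ℂ y {z : ℂ | 0 < z.re} := by
    rw [hyd]
    apply DifferentiableOn.neg
    intro s hs
    by_cases h : s = β
    · subst h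
      obtain ⟨p, hp⟩ := hx.1.analyticAt hnhds
      exact hp.has_fpower_series_dslope_fslope.analyticAt.differentiableAt.differentiableWithinAt
    · exact (differentiableWithinAt_dslope_of_ne h).2 (hx.1 s hs)
  refine ⟨hdiff, ?_⟩
  obtain ⟨M, hM, hMb⟩ := hx.2
  set a := β.re with haa
  set b := β.im with hbb
  have ha : 0 < a := hβ
  -- compact rectangle around β
  set K : Set ℂ :=
    (fun p : ℝ × ℝ => (p.1 : ℂ) + (p.2 : ℂ) * I) '' (Icc (a/2) (3*a/2) ×ˢ Icc (b-1) (b+1))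
    with hK
  have hmapc : Continuous fun p : ℝ × ℝ => (p.1 : ℂ) + (p.2 : ℂ) * I :=
    (Complex.continuous_ofReal.comp continuous_fst).add
      ((Complex.continuous_ofReal.comp continuous_snd).mul continuous_const)
  have hKc : IsCompact K := (isCompact_Icc.prod isCompact_Icc).image hmapc
  have hre : ∀ (p q : ℝ), ((p : ℂ) + (q : ℂ) * I).re = p := by intro p q; simp
  have him : ∀ (p q : ℝ), ((p : ℂ) + (q : ℂ) * I).im = q := by intro p q; simp
  have hKsub : K ⊆ {z : ℂ | 0 < z.re} := by
    rintro z ⟨⟨p, q⟩, ⟨hp, _⟩, rfl⟩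
    simp only [mem_setOf_eq, hre]
    linarith [hp.1]
  obtain ⟨C, hC⟩ := hKc.exists_bound_of_continuousOn (hdiff.continuousOn.mono hKsub)
  have hβK : β ∈ K := by
    refine ⟨(a, b), ⟨⟨by linarith, by linarith⟩, ⟨by linarith, by linarith⟩⟩, ?_⟩
    exact Complex.re_add_im β
  have hC0 : 0 ≤ C := le_trans (norm_nonneg _) (hC β hβK)
  set v := ‖x β‖ with hv
  have hv0 : 0 ≤ v := norm_nonneg _
  set er : ℝ := 8 / a^2 with her
  have her0 : 0 ≤ er := by positivity
  set c1r : ℝ := 2 + er with hc1r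
  have hc1r0 : 0 ≤ c1r := by linarith
  set Dr : ℝ := C^2 + v^2 * er with hDr
  have hDr0 : 0 ≤ Dr := add_nonneg (sq_nonneg C) (mul_nonneg (sq_nonneg v) her0)
  set c1 : ℝ≥0∞ := ENNReal.ofReal c1r with hc1
  set D : ℝ≥0∞ := ENNReal.ofReal Dr with hD
  set tail : ℝ → ℝ≥0∞ := fun ω => ENNReal.ofReal (4*v^2 * (1+(ω-b)^2)⁻¹) with htl
  set ind : ℝ → ℝ≥0∞ := fun ω => (Icc (b-1) (b+1)).indicator (fun _ => D) ω with hind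
  have key : ∀ z : ℂ, (‖z‖₊ : ℝ≥0∞)^2 = ENNReal.ofReal (‖z‖^2) := by
    intro z
    rw [ENNReal.ofReal_pow (norm_nonneg z), ofReal_norm_eq_enorm, enorm_eq_nnnorm]
  -- master pointwise bound
  have master : ∀ r : ℝ, 0 < r → ∀ ω : ℝ,
      (‖y ((r : ℂ) + (ω : ℂ) * I)‖₊ : ℝ≥0∞)^2 ≤
        c1 * (‖x ((r : ℂ) + (ω : ℂ) * I)‖₊ : ℝ≥0∞)^2 + (ind ω + tail ω) := by
    intro r hr ω
    set s : ℂ := (r : ℂ) + (ω : ℂ) * I with hs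
    set u := ‖x s‖ with hu
    have hu0 : 0 ≤ u := norm_nonneg _
    by_cases hcase : |ω - b| ≤ 1 ∧ (a/2 ≤ r ∧ r ≤ 3*a/2)
    · -- on the compact rectangle
      obtain ⟨h1, h2⟩ := hcase
      have hωI : ω ∈ Icc (b-1) (b+1) := by
        rw [mem_Icc]; constructor <;> [linarith [abs_le.1 h1|>.1]; linarith [abs_le.1 h1|>.2]]
      have hsK : s ∈ K := ⟨(r, ω), ⟨h2, hωI⟩, rfl⟩
      have hyb : ‖y s‖ ≤ C := hC s hsK
      have : (‖y s‖₊ : ℝ≥0∞)^2 ≤ D := by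
        rw [key]
        apply ENNReal.ofReal_le_ofReal
        rw [hDr]
        nlinarith [norm_nonneg (y s), mul_nonneg (sq_nonneg v) her0]
      calc (‖y s‖₊ : ℝ≥0∞)^2 ≤ D := this
        _ ≤ ind ω + tail ω := by
            rw [hind]; simp only [indicator_of_mem hωI]; exact le_self_add
        _ ≤ _ := le_add_self
    · -- away from β in at least one direction
      push_neg at hcase
      have hsβ : s ≠ β := by
        intro he
        have hre' : r = a := by rw [haa, ← he, hs, hre]
        have him' : ω = b := by rw [hbb, ← he, hs, him]
        rcases le_or_gt (|ω - b|) 1 with h1 | h1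
        · have h2 := hcase h1 (by linarith)
          linarith
        · rw [him', sub_self, abs_zero] at h1
          linarith
      have hd2 : ‖β - s‖^2 = (a - r)^2 + (b - ω)^2 := by
        rw [Complex.sq_norm, Complex.normSq_apply, hs]
        simp only [Complex.sub_re, Complex.sub_im, Complex.add_re, Complex.add_im,
          Complex.ofReal_re, Complex.ofReal_im, Complex.mul_re, Complex.mul_im,
          Complex.I_re, Complex.I_im, ← haa, ← hbb]
        ring
      set d2 : ℝ := (a - r)^2 + (b - ω)^2 with hd2d
      have hyval : ‖y s‖^2 = ‖x s - x β‖^2 / d2 := by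
        rw [hy]
        simp only [hsβ, if_false, norm_div, div_pow, hd2]
      have hxd : ‖x s - x β‖^2 ≤ 2*u^2 + 2*v^2 := by
        have h := norm_sub_le (x s) (x β)
        rw [hu, hv]
        nlinarith [norm_nonneg (x s - x β), norm_nonneg (x s), norm_nonneg (x β),
          sq_nonneg (‖x s‖ - ‖x β‖)]
      have hd2pos : 0 < d2 := by
        have h0 : (0:ℝ) < ‖β - s‖ := norm_pos_iff.2 (sub_ne_zero.2 (Ne.symm hsβ))
        rw [← hd2]
        exact pow_pos h0 2
      by_cases h1 : |ω - b| ≤ 1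
      · -- then r is far from a
        have h2 := hcase h1
        have hfar : a^2/4 ≤ (a - r)^2 := by
          rcases le_or_gt (a/2) r with h | h
          · have := h2 h; nlinarith
          · nlinarith
        have hreal : ‖y s‖^2 ≤ c1r * u^2 + Dr := by
          rw [hyval, div_le_iff₀ hd2pos]
          have hd2' : a^2/4 ≤ d2 := by rw [hd2d]; nlinarith [sq_nonneg (b - ω)]
          have hkey : 2 ≤ er * d2 := by
            have ha0 : a ≠ 0 := ne_of_gt ha
            have he2 : er * (a^2/4) = 2 := by rw [her]; field_simp; ring
            nlinarith [mul_le_mul_of_nonneg_left hd2' her0]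
          rw [hc1r, hDr]
          nlinarith [mul_le_mul_of_nonneg_left hkey (sq_nonneg u),
            mul_le_mul_of_nonneg_left hkey (sq_nonneg v),
            mul_nonneg (sq_nonneg u) hd2pos.le, mul_nonneg (sq_nonneg C) hd2pos.le, hxd]
        have hωI : ω ∈ Icc (b-1) (b+1) := by
          rw [mem_Icc]; constructor <;> [linarith [abs_le.1 h1|>.1]; linarith [abs_le.1 h1|>.2]]
        calc (‖y s‖₊ : ℝ≥0∞)^2 = ENNReal.ofReal (‖y s‖^2) := key _
          _ ≤ ENNReal.ofReal (c1r * u^2 + Dr) := ENNReal.ofReal_le_ofReal hreal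
          _ = ENNReal.ofReal (c1r * u^2) + D := by
              rw [ENNReal.ofReal_add (mul_nonneg hc1r0 (sq_nonneg u)) hDr0]
          _ = c1 * (‖x s‖₊ : ℝ≥0∞)^2 + D := by
              rw [ENNReal.ofReal_mul hc1r0, ← key]
          _ ≤ _ := by
              apply add_le_add_right
              rw [hind]; simp only [indicator_of_mem hωI]; exact le_self_add
      · -- ω is far from b
        push_neg at h1
        have ht2 : 1 ≤ (ω - b)^2 := by nlinarith [abs_nonneg (ω - b), _root_.sq_abs (ω - b)]
        have hd2ge : (ω - b)^2 ≤ d2 := by rw [hd2d]; nlinarith [sq_nonneg (a - r)]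
        have hreal : ‖y s‖^2 ≤ c1r * u^2 + 4*v^2 * (1+(ω-b)^2)⁻¹ := by
          rw [hyval, div_le_iff₀ hd2pos]
          set w : ℝ := 4*v^2 * (1+(ω-b)^2)⁻¹ with hw
          have hwpos : 0 ≤ w := by positivity
          have hwid : w * (1+(ω-b)^2) = 4*v^2 := by
            rw [hw]; field_simp
          have hd21 : 1 ≤ d2 := le_trans ht2 hd2ge
          rw [hc1r]
          nlinarith [mul_nonneg hwpos (sub_nonneg.2 hd2ge),
            mul_nonneg hwpos (sub_nonneg.2 ht2), hwid, hxd,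
            mul_le_mul_of_nonneg_left hd21 (mul_nonneg (by norm_num : (0:ℝ) ≤ 2) (sq_nonneg u)),
            mul_nonneg (mul_nonneg her0 (sq_nonneg u)) hd2pos.le]
        calc (‖y s‖₊ : ℝ≥0∞)^2 = ENNReal.ofReal (‖y s‖^2) := key _
          _ ≤ ENNReal.ofReal (c1r * u^2 + 4*v^2 * (1+(ω-b)^2)⁻¹) := ENNReal.ofReal_le_ofReal hreal
          _ = ENNReal.ofReal (c1r * u^2) + tail ω := by
              rw [ENNReal.ofReal_add (mul_nonneg hc1r0 (sq_nonneg u)) (by positivity)]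
          _ = c1 * (‖x s‖₊ : ℝ≥0∞)^2 + tail ω := by
              rw [ENNReal.ofReal_mul hc1r0, ← key]
          _ ≤ _ := add_le_add_right le_add_self _
  -- tail integral is finite
  have hintg : Integrable (fun ω : ℝ => 4*v^2 * (1+(ω-b)^2)⁻¹) :=
    (integrable_inv_one_add_sq.comp_sub_right b).const_mul (4*v^2)
  have htail : (∫⁻ ω : ℝ, tail ω) < ⊤ :=
    lt_of_le_of_lt (lintegral_mono fun ω => Real.ofReal_le_enorm _) hintg.2
  refine ⟨c1 * M + (D * ENNReal.ofReal 2 + ∫⁻ ω : ℝ, tail ω), ?_, ?_⟩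
  · apply ENNReal.add_lt_top.2
    constructor
    · exact ENNReal.mul_lt_top ENNReal.ofReal_lt_top hM
    · exact ENNReal.add_lt_top.2 ⟨ENNReal.mul_lt_top ENNReal.ofReal_lt_top ENNReal.ofReal_lt_top, htail⟩
  · intro r hr
    have hcont : Continuous fun ω : ℝ => x ((r : ℂ) + (ω : ℂ) * I) := by
      apply hx.1.continuousOn.comp_continuous
        (continuous_const.add (Complex.continuous_ofReal.mul continuous_const))
      intro ω; show 0 < ((r:ℂ) + (ω:ℂ)*I).re; rw [hre]; exact hr
    have hXm : Measurable fun ω : ℝ => c1 * (‖x ((r : ℂ) + (ω : ℂ) * I)‖₊ : ℝ≥0∞)^2 :=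
      (hcont.measurable.enorm.pow_const 2).const_mul c1
    have hindm : Measurable ind := measurable_const.indicator measurableSet_Icc
    calc (∫⁻ ω : ℝ, (‖y ((r : ℂ) + (ω : ℂ) * I)‖₊ : ℝ≥0∞)^2)
        ≤ ∫⁻ ω : ℝ, (c1 * (‖x ((r : ℂ) + (ω : ℂ) * I)‖₊ : ℝ≥0∞)^2 + (ind ω + tail ω)) :=
          lintegral_mono (master r hr)
      _ = (∫⁻ ω : ℝ, c1 * (‖x ((r : ℂ) + (ω : ℂ) * I)‖₊ : ℝ≥0∞)^2) +
            ∫⁻ ω : ℝ, (ind ω + tail ω) := lintegral_add_left hXm _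
      _ = (∫⁻ ω : ℝ, c1 * (‖x ((r : ℂ) + (ω : ℂ) * I)‖₊ : ℝ≥0∞)^2) +
            ((∫⁻ ω : ℝ, ind ω) + ∫⁻ ω : ℝ, tail ω) := by rw [lintegral_add_left hindm]
      _ ≤ c1 * M + (D * ENNReal.ofReal 2 + ∫⁻ ω : ℝ, tail ω) := by
          apply add_le_add
          · rw [lintegral_const_mul' c1 _ ENNReal.ofReal_ne_top]
            exact mul_le_mul_right (hMb r hr) c1
          · apply add_le_add_left
            rw [hind, lintegral_indicator_const measurableSet_Icc, Real.volume_Icc]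
            apply le_of_eq
            congr 1
            ring_nf

end
end

section
/- Let G ∈ H_∞(ℂ₀⁺) and let β ∈ ℂ₀⁺. Then the function y defined on ℂ₀⁺ by y(s) = (G(s) − G(β))/(β − s) for s ≠ β and y(β) = −G′(β) belongs to H₂(ℂ₀⁺). -/
open MeasureTheory Complex ENNReal

noncomputable section

/-- Membership in `H_∞(ℂ₀⁺)`: `f` is holomorphic and bounded on the right half-plane. -/
def MemHinfPlus (f : ℂ → ℂ) : Prop :=
  DifferentiableOn ℂ f {z : ℂ | 0 < z.re} ∧
  ∃ M : ℝ, ∀ z : ℂ, 0 < z.re → ‖f z‖ ≤ M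

/-- Let `G ∈ H_∞(ℂ₀⁺)` and let `β ∈ ℂ₀⁺`.  Then the function `y` defined
on `ℂ₀⁺` by `y(s) = (G(s) − G(β))/(β − s)` for `s ≠ β` and `y(β) = −G′(β)` belongs to
`H₂(ℂ₀⁺)`. -/
theorem statement2 (G : ℂ → ℂ) (hG : MemHinfPlus G) (β : ℂ) (hβ : 0 < β.re) :
    MemH2plus (fun s : ℂ => if s = β then -deriv G β else (G s - G β) / (β - s)) := by
  obtain ⟨hGd, M, hM⟩ := hG
  have hM0 : 0 ≤ M := (norm_nonneg _).trans (hM β hβ)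
  set S : Set ℂ := {z : ℂ | 0 < z.re} with hS
  have hSopen : IsOpen S := isOpen_lt continuous_const continuous_re
  have hβS : β ∈ S := hβ
  -- The function equals -(dslope G β)
  have hy : (fun s : ℂ => if s = β then -deriv G β else (G s - G β) / (β - s)) =
      fun s : ℂ => -(dslope G β s) := by
    funext s
    by_cases h : s = β
    · simp [h, dslope_same]
    · rw [if_neg h, dslope_of_ne _ h, slope_def_field, ← neg_sub s β, div_neg]
  rw [hy]
  constructor
  · exact ((Complex.differentiableOn_dslope (hSopen.mem_nhds hβS)).mpr hGd).neg
  -- Set up constants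
  set ρ : ℝ := β.re / 2 with hρdef
  have hρ : 0 < ρ := by positivity
  set K : ℝ := 2 * M + 1 with hKdef
  have hK : 0 < K := by positivity
  have hball : Metric.ball β ρ ⊆ S := by
    intro z hz
    have h1 : |(z - β).re| ≤ ‖z - β‖ := Complex.abs_re_le_norm _
    have h2 : ‖z - β‖ < ρ := by
      simpa [Metric.mem_ball, Complex.dist_eq] using hz
    have : |z.re - β.re| < ρ := by
      rw [← Complex.sub_re]; exact h1.trans_lt h2
    have := abs_lt.mp this
    simp only [hS, Set.mem_setOf_eq]
    linarith
  -- Schwarz-type bound in the ball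
  have hmaps : Set.MapsTo G (Metric.ball β ρ) (Metric.ball (G β) K) := by
    intro z hz
    have hzS : z ∈ S := hball hz
    rw [Metric.mem_ball, dist_eq_norm]
    calc ‖G z - G β‖ ≤ ‖G z‖ + ‖G β‖ := norm_sub_le _ _
      _ ≤ M + M := add_le_add (hM z hzS) (hM β hβ)
      _ < K := by rw [hKdef]; linarith
  have hschwarz : ∀ z ∈ Metric.ball β ρ, ‖dslope G β z‖ ≤ K / ρ := fun z hz =>
    Complex.norm_dslope_le_div_of_mapsTo_ball (hGd.mono hball) (hmaps.mono_right Metric.ball_subset_closedBall) hz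
  -- Pointwise bound
  have hbound : ∀ s : ℂ, 0 < s.re →
      ‖dslope G β s‖ ^ 2 ≤ 2 * K ^ 2 * (ρ ^ 2 + (s.im - β.im) ^ 2)⁻¹ := by
    intro s hs
    set m : ℝ := max ρ |s.im - β.im| with hm
    have hmρ : ρ ≤ m := le_max_left _ _
    have hmΔ : |s.im - β.im| ≤ m := le_max_right _ _
    have hm0 : 0 < m := lt_of_lt_of_le hρ hmρ
    have h1 : ‖dslope G β s‖ ≤ K / m := by
      by_cases hsb : s ∈ Metric.ball β ρ
      · have hΔρ : |s.im - β.im| ≤ ρ := by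
          have h2 : ‖s - β‖ < ρ := by
            simpa [Metric.mem_ball, Complex.dist_eq] using hsb
          have h1 : |(s - β).im| ≤ ‖s - β‖ := Complex.abs_im_le_norm _
          rw [Complex.sub_im] at h1
          linarith
        have : m = ρ := max_eq_left hΔρ
        rw [this]
        exact hschwarz s hsb
      · have hdist : ρ ≤ ‖s - β‖ := by
          simpa [Metric.mem_ball, Complex.dist_eq, not_lt] using hsb
        have hne : s ≠ β := by
          intro h; rw [h] at hdist; simp at hdist; linarith
        have hΔabs : |s.im - β.im| ≤ ‖s - β‖ := by
          have := Complex.abs_im_le_norm (s - β)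
          rwa [Complex.sub_im] at this
        have hmabs : m ≤ ‖s - β‖ := max_le hdist hΔabs
        rw [dslope_of_ne _ hne, slope_def_field]
        rw [norm_div]
        have hnum : ‖G s - G β‖ ≤ K := by
          calc ‖G s - G β‖ ≤ ‖G s‖ + ‖G β‖ := norm_sub_le _ _
            _ ≤ M + M := add_le_add (hM s hs) (hM β hβ)
            _ ≤ K := by rw [hKdef]; linarith
        have : ‖s - β‖ = ‖s - β‖ := rfl
        exact div_le_div₀ hK.le hnum hm0 (by rw [this]; exact hmabs)
    have h2 : ‖dslope G β s‖ ^ 2 ≤ (K / m) ^ 2 := by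
      have := pow_le_pow_left₀ (norm_nonneg _) h1 2
      exact this
    refine h2.trans ?_
    rw [div_pow, div_le_iff₀ (by positivity)]
    have habs : |s.im - β.im| ^ 2 = (s.im - β.im) ^ 2 := sq_abs _
    have hmsq1 : ρ ^ 2 ≤ m ^ 2 := by nlinarith
    have hmsq2 : (s.im - β.im) ^ 2 ≤ m ^ 2 := by
      rw [← habs]; exact pow_le_pow_left₀ (abs_nonneg _) hmΔ 2
    have hpos : 0 < ρ ^ 2 + (s.im - β.im) ^ 2 := by positivity
    rw [mul_right_comm, ← div_eq_mul_inv, le_div_iff₀ hpos]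
    nlinarith [sq_nonneg K]
  -- Integrability of the dominating function
  have base : Integrable (fun x : ℝ => (1 + x ^ 2)⁻¹) := integrable_inv_one_add_sq
  have i1 : Integrable (fun x : ℝ => (1 + (x / ρ) ^ 2)⁻¹) := base.comp_div hρ.ne'
  have i2 : Integrable (fun x : ℝ => (ρ ^ 2 + x ^ 2)⁻¹) := by
    have heq : (fun x : ℝ => (ρ ^ 2 + x ^ 2)⁻¹)
        = fun x : ℝ => (ρ ^ 2)⁻¹ * (1 + (x / ρ) ^ 2)⁻¹ := by
      funext x
      rw [← mul_inv]
      congr 1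
      field_simp
    rw [heq]
    exact i1.const_mul _
  have i3 : Integrable (fun ω : ℝ => (ρ ^ 2 + (ω - β.im) ^ 2)⁻¹) := i2.comp_sub_right β.im
  have i4 : Integrable (fun ω : ℝ => 2 * K ^ 2 * (ρ ^ 2 + (ω - β.im) ^ 2)⁻¹) :=
    i3.const_mul _
  refine ⟨∫⁻ ω : ℝ, ENNReal.ofReal (2 * K ^ 2 * (ρ ^ 2 + (ω - β.im) ^ 2)⁻¹), ?_, ?_⟩
  · calc (∫⁻ ω : ℝ, ENNReal.ofReal (2 * K ^ 2 * (ρ ^ 2 + (ω - β.im) ^ 2)⁻¹))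
        ≤ ∫⁻ ω : ℝ, (‖2 * K ^ 2 * (ρ ^ 2 + (ω - β.im) ^ 2)⁻¹‖₊ : ℝ≥0∞) :=
          lintegral_mono fun ω => Real.ofReal_le_enorm _
      _ < ⊤ := i4.hasFiniteIntegral
  · intro r hr
    refine lintegral_mono fun ω => ?_
    have hre : (↑r + ↑ω * Complex.I).re = r := by simp
    have him : (↑r + ↑ω * Complex.I).im = ω := by simp
    have hb := hbound (↑r + ↑ω * Complex.I) (by rw [hre]; exact hr)
    rw [him] at hb
    have : ‖-(dslope G β (↑r + ↑ω * Complex.I))‖ = ‖dslope G β (↑r + ↑ω * Complex.I)‖ :=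
      norm_neg _
    calc ((‖-(dslope G β (↑r + ↑ω * Complex.I))‖₊ : ℝ≥0∞)) ^ 2
        = ENNReal.ofReal (‖-(dslope G β (↑r + ↑ω * Complex.I))‖ ^ 2) := by
          rw [ENNReal.ofReal_pow (norm_nonneg _), ← enorm_eq_nnnorm, ofReal_norm_eq_enorm]
      _ ≤ ENNReal.ofReal (2 * K ^ 2 * (ρ ^ 2 + (ω - β.im) ^ 2)⁻¹) := by
          apply ENNReal.ofReal_le_ofReal
          rw [this]
          exact hb


end
end

section
/- Let H be a complex Hilbert space, let A be a bounded linear operator on H with A* = −A, and let b ∈ H. For every s ∈ ℂ with Re s > 0, the operator L_s := s·I − A + (1/2)·(b⊗b), where (b⊗b)x = ⟨x, b⟩·b, is boundedly invertible, and the complex number G(s) := 1 − ⟨L_s⁻¹ b, b⟩ satisfies |G(s)| ≤ 1. -/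
open ContinuousLinearMap

/-- Let `H` be a complex Hilbert space, `A` a bounded operator on `H`
with `A* = −A`, and `b ∈ H`.  For every `s ∈ ℂ` with `Re s > 0`, the operator
`L_s := s·I − A + (1/2)·(b⊗b)`, where `(b⊗b)x = ⟨x,b⟩·b` (inner ℂ product linear in the
first argument, so `(b⊗b)x = ⟪b,x⟫·b` in Mathlib's convention), is boundedly invertible,
and `G(s) := 1 − ⟨L_s⁻¹ b, b⟩` satisfies `|G(s)| ≤ 1`. -/
theorem statement15 {H : Type*} [NormedAddCommGroup H] [InnerProductSpace ℂ H]
    [CompleteSpace H] (A : H →L[ℂ] H) (hA : adjoint A = -A) (b : H)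
    (s : ℂ) (hs : 0 < s.re) :
    ∃ Linv : H →L[ℂ] H,
      Linv.comp (s • (1 : H →L[ℂ] H) - A +
          ((1 : ℂ)/2) • (toSpanSingleton ℂ b).comp (innerSL ℂ b)) = 1 ∧
      (s • (1 : H →L[ℂ] H) - A +
          ((1 : ℂ)/2) • (toSpanSingleton ℂ b).comp (innerSL ℂ b)).comp Linv = 1 ∧
      ‖(1 : ℂ) - (inner ℂ b (Linv b) : ℂ)‖ ≤ 1 := by
  set L : H →L[ℂ] H := s • (1 : H →L[ℂ] H) - A +
      ((1 : ℂ)/2) • (toSpanSingleton ℂ b).comp (innerSL ℂ b) with hL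
  have hLapp : ∀ x : H, L x = s • x - A x + ((1:ℂ)/2) • (inner ℂ b x : ℂ) • b := by
    intro x; simp [hL, toSpanSingleton_apply]
  -- skew-adjointness: re ⟪x, A x⟫ = 0
  have hskew : ∀ x : H, (inner ℂ x (A x) : ℂ).re = 0 := by
    intro x
    have h := ContinuousLinearMap.adjoint_inner_left A x x
    rw [hA] at h
    have h2 : (starRingEnd ℂ) (inner ℂ x (A x) : ℂ) = inner ℂ (A x) x := inner_conj_symm _ _
    have h3 : -(inner ℂ (A x) x : ℂ) = inner ℂ x (A x) := by simpa using h
    have := congrArg Complex.re h3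
    rw [← h2] at this
    simp only [Complex.neg_re, Complex.conj_re] at this
    linarith
  -- key identity for re ⟪x, L x⟫
  have hkey : ∀ x : H, (inner ℂ x (L x) : ℂ).re
      = s.re * ‖x‖^2 + (1/2) * Complex.normSq (inner ℂ b x : ℂ) := by
    intro x
    rw [hLapp, inner_add_right, inner_sub_right, inner_smul_right, inner_smul_right,
      inner_smul_right]
    have h1 : (inner ℂ x x : ℂ) = (‖x‖ : ℂ)^2 := inner_self_eq_norm_sq_to_K x
    have h2 : (inner ℂ x b : ℂ) = (starRingEnd ℂ) (inner ℂ b x : ℂ) := (inner_conj_symm x b).symm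
    rw [h1, h2, Complex.mul_conj]
    have h3 : ((‖x‖ : ℂ))^2 = ((‖x‖^2 : ℝ) : ℂ) := by push_cast; ring
    rw [h3]
    simp only [Complex.add_re, Complex.sub_re, Complex.mul_re, Complex.ofReal_re,
      Complex.ofReal_im, hskew x, Complex.div_re, Complex.one_re, Complex.one_im]
    norm_num
  have hco : ∀ x : H, s.re * ‖x‖^2 ≤ (inner ℂ x (L x) : ℂ).re := by
    intro x
    rw [hkey]
    nlinarith [Complex.normSq_nonneg (inner ℂ b x : ℂ)]
  -- lower bound ‖x‖ ≤ s.re⁻¹ * ‖L x‖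
  have hbound : ∀ x : H, ‖x‖ ≤ s.re⁻¹ * ‖L x‖ := by
    intro x
    rcases eq_or_ne x 0 with rfl | hx
    · simp [mul_nonneg (inv_nonneg.2 hs.le) (norm_nonneg _)]
    · have h1 : s.re * ‖x‖^2 ≤ ‖x‖ * ‖L x‖ := by
        calc s.re * ‖x‖^2 ≤ (inner ℂ x (L x) : ℂ).re := hco x
          _ ≤ ‖(inner ℂ x (L x) : ℂ)‖ := Complex.re_le_norm _
          _ ≤ ‖x‖ * ‖L x‖ := norm_inner_le_norm _ _
      have hxpos : 0 < ‖x‖ := norm_pos_iff.2 hx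
      rw [le_inv_mul_iff₀ hs]
      nlinarith
  have hanti : AntilipschitzWith (s.re.toNNReal)⁻¹ L := by
    apply L.antilipschitz_of_bound
    intro x
    rw [NNReal.coe_inv, Real.coe_toNNReal _ hs.le]
    exact hbound x
  have hker : LinearMap.ker (L : H →ₗ[ℂ] H) = ⊥ :=
    (LinearMap.ker_eq_bot (f := (L : H →ₗ[ℂ] H))).mpr hanti.injective
  have hclosed : IsClosed (Set.range L) := hanti.isClosed_range L.uniformContinuous
  have hclosed' : IsClosed ((LinearMap.range (L : H →ₗ[ℂ] H) : Submodule ℂ H) : Set H) := by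
    simpa [LinearMap.coe_range] using hclosed
  haveI : CompleteSpace (LinearMap.range (L : H →ₗ[ℂ] H) : Submodule ℂ H) := hclosed'.completeSpace_coe
  have hrange : LinearMap.range (L : H →ₗ[ℂ] H) = ⊤ := by
    rw [← Submodule.orthogonal_eq_bot_iff]
    rw [Submodule.eq_bot_iff]
    intro y hy
    rw [Submodule.mem_orthogonal] at hy
    have h0 : (inner ℂ (L y) y : ℂ) = 0 := hy (L y) (LinearMap.mem_range_self _ y)
    have h1 : (inner ℂ y (L y) : ℂ) = 0 := by
      rw [← inner_conj_symm y (L y), h0, map_zero]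
    have h2 := hco y
    rw [h1] at h2
    simp only [Complex.zero_re] at h2
    have h2b : ‖y‖^2 ≤ 0 := by nlinarith [h2, hs]
    have h4 : ‖y‖^2 = 0 := le_antisymm h2b (sq_nonneg _)
    have h5 : ‖y‖ = 0 := (pow_eq_zero_iff two_ne_zero).mp h4
    simpa using h5
  set e := ContinuousLinearEquiv.ofBijective L hker hrange with he
  refine ⟨e.symm.toContinuousLinearMap, ?_, ?_, ?_⟩
  · ext x
    show e.symm (L x) = x
    exact ContinuousLinearEquiv.ofBijective_symm_apply_apply L hker hrange x
  · ext x
    show L (e.symm x) = x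
    exact ContinuousLinearEquiv.ofBijective_apply_symm_apply L hker hrange x
  · set x : H := e.symm b with hx
    have hLx : L x = b := ContinuousLinearEquiv.ofBijective_apply_symm_apply L hker hrange b
    set c : ℂ := inner ℂ b x with hc
    have hre : s.re * ‖x‖^2 + (1/2) * Complex.normSq c = c.re := by
      have h1 : (inner ℂ x (L x) : ℂ).re = (inner ℂ x b : ℂ).re := by rw [hLx]
      rw [hkey x] at h1
      have h2 : (inner ℂ x b : ℂ) = (starRingEnd ℂ) c := by rw [hc, inner_conj_symm]
      rw [h2, Complex.conj_re] at h1
      exact h1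
    have hns : ‖(1:ℂ) - c‖^2 = Complex.normSq ((1:ℂ) - c) := by
      rw [Complex.sq_norm]
    have hexp : Complex.normSq ((1:ℂ) - c) = 1 - 2*c.re + Complex.normSq c := by
      simp only [Complex.normSq_apply, Complex.sub_re, Complex.sub_im, Complex.one_re,
        Complex.one_im]
      ring
    have hsq : ‖(1:ℂ) - c‖^2 = 1 - 2 * (s.re * ‖x‖^2) := by
      rw [hns, hexp]; linarith [hre]
    have h1 : ‖(1:ℂ) - c‖^2 ≤ 1 := by
      rw [hsq]
      nlinarith [sq_nonneg ‖x‖, hs.le]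
    show ‖(1:ℂ) - c‖ ≤ 1
    nlinarith [norm_nonneg ((1:ℂ) - c)]
end

section
/- Let H be a complex Hilbert space, let A be a bounded linear operator on H with A* = −A, and let b ∈ H. For every ω ∈ ℝ such that the operator L_{iω} := iω·I − A + (1/2)·(b⊗b), where (b⊗b)x = ⟨x, b⟩·b, is boundedly invertible, the complex number G(iω) := 1 − ⟨L_{iω}⁻¹ b, b⟩ satisfies |G(iω)| = 1. -/
open ContinuousLinearMap

/-- Let `H` be a complex Hilbert space, `A` a bounded operator on `H`
with `A* = −A`, and `b ∈ H`.  For every `ω ∈ ℝ` such that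
`L_{iω} := iω·I − A + (1/2)·(b⊗b)`, where `(b⊗b)x = ⟨x,b⟩·b` (inner product linear in the
first argument, so `(b⊗b)x = ⟪b,x⟫·b` in Mathlib's convention), is boundedly invertible,
the number `G(iω) := 1 − ⟨L_{iω}⁻¹ b, b⟩` satisfies `|G(iω)| = 1`. -/
theorem statement16 {H : Type*} [NormedAddCommGroup H] [InnerProductSpace ℂ H]
    [CompleteSpace H] (A : H →L[ℂ] H) (hA : adjoint A = -A) (b : H)
    (ω : ℝ) (Linv : H →L[ℂ] H)
    (h1 : Linv.comp (((ω : ℂ) * Complex.I) • (1 : H →L[ℂ] H) - A +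
        ((1 : ℂ)/2) • (toSpanSingleton ℂ b).comp (innerSL ℂ b)) = 1)
    (h2 : (((ω : ℂ) * Complex.I) • (1 : H →L[ℂ] H) - A +
        ((1 : ℂ)/2) • (toSpanSingleton ℂ b).comp (innerSL ℂ b)).comp Linv = 1) :
    ‖(1 : ℂ) - (inner ℂ b (Linv b) : ℂ)‖ = 1 := by
  set x := Linv b with hx
  set g : ℂ := inner ℂ b x with hg
  -- L x = b
  have hLx : ((ω : ℂ) * Complex.I) • x - A x + ((1:ℂ)/2) • (g • b) = b := by
    have := congrArg (fun T : H →L[ℂ] H => T b) h2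
    simpa [ContinuousLinearMap.comp_apply, toSpanSingleton_apply, innerSL_apply_apply,
      hg, hx] using this
  -- inner ℂ x with both sides
  have key : ((ω : ℂ) * Complex.I) * (inner ℂ x x : ℂ) - (inner ℂ x (A x) : ℂ)
      + ((1:ℂ)/2) * g * (inner ℂ x b : ℂ) = (inner ℂ x b : ℂ) := by
    have := congrArg (fun y : H => (inner ℂ x y : ℂ)) hLx
    simpa [inner_add_right, inner_sub_right, inner_smul_right, mul_assoc, mul_comm,
      mul_left_comm] using this
  have hAre : (inner ℂ x (A x) : ℂ).re = 0 := by
    have h : (inner ℂ x (A x) : ℂ) = - (starRingEnd ℂ) (inner ℂ x (A x) : ℂ) := by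
      calc (inner ℂ x (A x) : ℂ) = inner ℂ (adjoint A x) x := by
            rw [ContinuousLinearMap.adjoint_inner_left]
        _ = inner ℂ (-(A x)) x := by rw [hA]; rfl
        _ = -(inner ℂ (A x) x : ℂ) := by rw [inner_neg_left]
        _ = - (starRingEnd ℂ) (inner ℂ x (A x) : ℂ) := by rw [inner_conj_symm]
    have := congrArg Complex.re h
    simp only [Complex.neg_re, Complex.conj_re] at this
    linarith
  have hxx : (inner ℂ x x : ℂ).im = 0 := by
    rw [inner_self_eq_norm_sq_to_K]
    simp [pow_two, Complex.mul_im]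
  have hxb : (inner ℂ x b : ℂ) = (starRingEnd ℂ) g := by rw [hg, inner_conj_symm]
  have hre := congrArg Complex.re key
  rw [hxb] at hre
  have hmc : g * (starRingEnd ℂ) g = (Complex.normSq g : ℂ) := Complex.mul_conj g
  have hre2 : (1/2 : ℝ) * Complex.normSq g = g.re := by
    have h1' : (((ω : ℂ) * Complex.I) * (inner ℂ x x : ℂ)).re = 0 := by
      rw [Complex.mul_re, hxx]; simp
    have h2' : (((1:ℂ)/2) * g * ((starRingEnd ℂ) g)).re = (1/2 : ℝ) * Complex.normSq g := by
      rw [mul_assoc, hmc]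
      simp
    have h3' : ((starRingEnd ℂ) g).re = g.re := by simp
    simp only [Complex.sub_re, Complex.add_re, h1', h2', h3'] at hre
    linarith [hAre, hre]
  have hns : Complex.normSq ((1:ℂ) - g) = 1 := by
    rw [Complex.normSq_apply] at *
    simp only [Complex.sub_re, Complex.sub_im, Complex.one_re, Complex.one_im]
    nlinarith [hre2]
  rw [Complex.norm_def, hns, Real.sqrt_one]
end
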